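/- For every integer N ≥ 0 and every continuous function g on the circle 𝕋, the N-th partial Fourier sum satisfies ‖S_N(g)‖_{C(𝕋)} ≤ c·‖g‖_{C(𝕋)}·log(N+2), where c > 0 is an absolute constant independent of N and g. -/

import Mathlib

open MeasureTheory Filter

/-- The `k`-th Fourier coefficient of a function on the circle, identified with a
`2π`-periodic function on `ℝ`: `f̂(k) = (1/2π) ∫_{-π}^{π} f(t) e^{-ikt} dt`. -/
noncomputable def fourierCoef (f : ℝ → ℂ) (k : ℤ) : ℂ :=
  (1 / (2 * Real.pi)) * ∫ t in (-Real.pi)..Real.pi, f t * Complex.exp (-(k : ℂ) * Complex.I * t)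

/-- The `N`-th partial sum of the Fourier series: `S_N(f)(t) = ∑_{|k| ≤ N} f̂(k) e^{ikt}`. -/
noncomputable def partialFourierSum (f : ℝ → ℂ) (N : ℕ) (t : ℝ) : ℂ :=
  ∑ k ∈ Finset.Icc (-(N : ℤ)) (N : ℤ), fourierCoef f k * Complex.exp ((k : ℂ) * Complex.I * t)

/-- The norm of the space `U(𝕋)`: `‖f‖_U = sup_N ‖S_N(f)‖_{C(𝕋)}`. -/
noncomputable def uNorm (f : ℝ → ℂ) : ℝ :=
  ⨆ N : ℕ, ⨆ t : ℝ, ‖partialFourierSum f N t‖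

/-- The Dirichlet kernel. -/
noncomputable def dirich (N : ℕ) (u : ℝ) : ℂ :=
  ∑ k ∈ Finset.Icc (-(N : ℤ)) (N : ℤ), Complex.exp ((k : ℂ) * Complex.I * u)

lemma exp_term_eq (k : ℤ) (u : ℝ) :
    Complex.exp ((k : ℂ) * Complex.I * u) = Complex.exp ((u : ℂ) * Complex.I) ^ k := by
  rw [← Complex.exp_int_mul]
  congr 1
  ring

lemma norm_exp_term (k : ℤ) (u : ℝ) : ‖Complex.exp ((k : ℂ) * Complex.I * u)‖ = 1 := by
  have h : (k : ℂ) * Complex.I * u = ((k * u : ℝ) : ℂ) * Complex.I := by push_cast; ring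
  rw [h, Complex.norm_exp_ofReal_mul_I]

lemma dirich_continuous (N : ℕ) : Continuous fun u : ℝ => dirich N u := by
  unfold dirich
  exact continuous_finset_sum _ fun k _ => Complex.continuous_exp.comp (by continuity)

lemma dirich_periodic' (N : ℕ) : Function.Periodic (dirich N) (2 * Real.pi) := by
  intro u
  unfold dirich
  refine Finset.sum_congr rfl fun k _ => ?_
  have h : (k : ℂ) * Complex.I * ((u + 2 * Real.pi : ℝ) : ℂ)
      = (k : ℂ) * Complex.I * (u : ℂ) + (k : ℤ) * (2 * Real.pi * Complex.I) := by
    push_cast; ring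
  rw [h, Complex.exp_add, Complex.exp_int_mul_two_pi_mul_I, mul_one]

lemma dirich_telescope (N : ℕ) (u : ℝ) :
    (Complex.exp ((u : ℂ) * Complex.I) - 1) * dirich N u
      = Complex.exp ((u : ℂ) * Complex.I) ^ ((N : ℤ) + 1)
        - Complex.exp ((u : ℂ) * Complex.I) ^ (-(N : ℤ)) := by
  set z := Complex.exp ((u : ℂ) * Complex.I) with hzdef
  have hz : z ≠ 0 := Complex.exp_ne_zero _
  induction N with
  | zero =>
      simp [dirich, exp_term_eq, ← hzdef]
  | succ n ih =>
      have hset : Finset.Icc (-((n : ℤ) + 1)) ((n : ℤ) + 1)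
          = insert (-((n : ℤ) + 1)) (insert ((n : ℤ) + 1) (Finset.Icc (-(n : ℤ)) (n : ℤ))) := by
        ext k
        simp only [Finset.mem_Icc, Finset.mem_insert]
        omega
      have hD : dirich (n + 1) u
          = z ^ (-((n : ℤ) + 1)) + (z ^ ((n : ℤ) + 1) + dirich n u) := by
        unfold dirich
        push_cast
        rw [hset, Finset.sum_insert, Finset.sum_insert]
        · simp only [exp_term_eq, ← hzdef]
        · simp only [Finset.mem_Icc]; omega
        · simp only [Finset.mem_insert, Finset.mem_Icc]; omega
      have hc : z ^ ((n : ℤ) + 1 + 1) = z * z ^ ((n : ℤ) + 1) := by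
        rw [zpow_add_one₀ hz]; ring
      have hd : z ^ (-(n : ℤ)) = z ^ (-((n : ℤ) + 1)) * z := by
        rw [← zpow_add_one₀ hz]; congr 1; ring
      rw [hD]
      push_cast
      linear_combination ih - hc - hd

lemma dirich_periodic (N : ℕ) : Function.Periodic (fun u => ‖dirich N u‖) (2 * Real.pi) :=
  fun u => by simp only []; rw [dirich_periodic' N u]

lemma norm_dirich_le (N : ℕ) (u : ℝ) : ‖dirich N u‖ ≤ 2 * (N : ℝ) + 1 := by
  have hcard : (Finset.Icc (-(N : ℤ)) (N : ℤ)).card = 2 * N + 1 := by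
    rw [Int.card_Icc]; omega
  calc ‖dirich N u‖ ≤ ∑ k ∈ Finset.Icc (-(N : ℤ)) (N : ℤ), ‖Complex.exp ((k : ℂ) * Complex.I * u)‖ :=
        norm_sum_le _ _
    _ = ∑ k ∈ Finset.Icc (-(N : ℤ)) (N : ℤ), (1 : ℝ) := by
        exact Finset.sum_congr rfl fun k _ => norm_exp_term k u
    _ = 2 * (N : ℝ) + 1 := by
        rw [Finset.sum_const, hcard]; push_cast; ring

lemma norm_exp_sub_one_ge (u : ℝ) (h : |u| ≤ Real.pi) :
    2 * |u| / Real.pi ≤ ‖Complex.exp ((u : ℂ) * Complex.I) - 1‖ := by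
  have hpi := Real.pi_pos
  have hs : |u| / Real.pi ≤ Real.sin (|u| / 2) := by
    have := Real.mul_le_sin (x := |u| / 2) (by positivity) (by linarith)
    calc |u| / Real.pi = 2 / Real.pi * (|u| / 2) := by field_simp
      _ ≤ Real.sin (|u| / 2) := this

  have hre : (Complex.exp ((u : ℂ) * Complex.I) - 1).re = Real.cos u - 1 := by
    simp [Complex.exp_ofReal_mul_I_re]
  have him : (Complex.exp ((u : ℂ) * Complex.I) - 1).im = Real.sin u := by
    simp [Complex.exp_ofReal_mul_I_im]
  have hA : ‖Complex.exp ((u : ℂ) * Complex.I) - 1‖ ^ 2 = 2 - 2 * Real.cos u := by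
    rw [Complex.sq_norm, Complex.normSq_apply, hre, him]
    nlinarith [Real.sin_sq_add_cos_sq u]
  have hcos : Real.cos u = Real.cos |u| := (Real.cos_abs u).symm
  have hhalf : Real.cos (|u| / 2) ^ 2 = 1 / 2 + Real.cos |u| / 2 := by
    have := Real.cos_sq (|u| / 2)
    rwa [show 2 * (|u| / 2) = |u| by ring] at this
  have hsin2 : Real.sin (|u| / 2) ^ 2 = 1 / 2 - Real.cos |u| / 2 := by
    nlinarith [Real.sin_sq_add_cos_sq (|u| / 2)]
  have hA2 : ‖Complex.exp ((u : ℂ) * Complex.I) - 1‖ ^ 2 = 4 * Real.sin (|u| / 2) ^ 2 := by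
    rw [hA, hcos, hsin2]; ring
  have hn : (0 : ℝ) ≤ ‖Complex.exp ((u : ℂ) * Complex.I) - 1‖ := norm_nonneg _
  have habs : (0 : ℝ) ≤ |u| / Real.pi := by positivity
  have hc0 : (0 : ℝ) ≤ 2 * |u| / Real.pi := by positivity
  have hA2' : (2 * |u| / Real.pi) ^ 2 ≤ ‖Complex.exp ((u : ℂ) * Complex.I) - 1‖ ^ 2 := by
    rw [hA2]
    have hs2 : (|u| / Real.pi) ^ 2 ≤ Real.sin (|u| / 2) ^ 2 := by nlinarith [hs, habs]
    have hr : (2 * |u| / Real.pi) ^ 2 = 4 * (|u| / Real.pi) ^ 2 := by ring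
    linarith [hs2, hr]
  have := Real.sqrt_le_sqrt hA2'
  rwa [Real.sqrt_sq hc0, Real.sqrt_sq hn] at this

lemma dirich_bound (N : ℕ) (u : ℝ) (h0 : u ≠ 0) (h : |u| ≤ Real.pi) :
    ‖dirich N u‖ ≤ Real.pi / |u| := by
  have hpi := Real.pi_pos
  have hu : 0 < |u| := abs_pos.mpr h0
  set z := Complex.exp ((u : ℂ) * Complex.I) with hzdef
  have hz1 : ‖z‖ = 1 := Complex.norm_exp_ofReal_mul_I u
  have htel := dirich_telescope N u
  have hrhs : ‖z ^ ((N : ℤ) + 1) - z ^ (-(N : ℤ))‖ ≤ 2 := by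
    calc ‖z ^ ((N : ℤ) + 1) - z ^ (-(N : ℤ))‖ ≤ ‖z ^ ((N : ℤ) + 1)‖ + ‖z ^ (-(N : ℤ))‖ :=
          norm_sub_le _ _
      _ = 2 := by rw [norm_zpow, norm_zpow, hz1]; norm_num
  have hlhs : ‖z - 1‖ * ‖dirich N u‖ ≤ 2 := by
    rw [← norm_mul, htel]; exact hrhs
  have hge : 2 * |u| / Real.pi ≤ ‖z - 1‖ := norm_exp_sub_one_ge u h
  have hDn : (0 : ℝ) ≤ ‖dirich N u‖ := norm_nonneg _
  rw [le_div_iff₀ hu]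
  have h2 : 2 * |u| / Real.pi * ‖dirich N u‖ ≤ 2 :=
    le_trans (mul_le_mul_of_nonneg_right hge hDn) hlhs
  have h3 : 2 * |u| * ‖dirich N u‖ ≤ 2 * Real.pi := by
    have hm := mul_le_mul_of_nonneg_left h2 hpi.le
    calc 2 * |u| * ‖dirich N u‖ = Real.pi * (2 * |u| / Real.pi * ‖dirich N u‖) := by
          field_simp
      _ ≤ Real.pi * 2 := hm
      _ = 2 * Real.pi := by ring
  linarith

lemma dirich_integral_bound (N : ℕ) :
    (∫ u in (-Real.pi)..Real.pi, ‖dirich N u‖)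
      ≤ 4 + 2 * Real.pi * Real.log (Real.pi * ((N : ℝ) + 1)) := by
  have hpi := Real.pi_pos
  have hpi3 := Real.pi_gt_three
  set a : ℝ := 1 / ((N : ℝ) + 1) with ha
  have hN1 : (0 : ℝ) < (N : ℝ) + 1 := by positivity
  have ha0 : 0 < a := by positivity
  have ha1 : a ≤ 1 := by
    rw [ha, div_le_one hN1]; linarith [Nat.cast_nonneg (α := ℝ) N]
  have hapi : a ≤ Real.pi := by linarith
  have hcont : Continuous fun u : ℝ => ‖dirich N u‖ := (dirich_continuous N).norm
  have hii : ∀ b c : ℝ, IntervalIntegrable (fun u => ‖dirich N u‖) volume b c :=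
    fun b c => hcont.intervalIntegrable b c
  have hval : (∫ u in a..Real.pi, Real.pi / u) = Real.pi * Real.log (Real.pi * ((N : ℝ) + 1)) := by
    have h0 : (0 : ℝ) ∉ Set.uIcc a Real.pi := by
      rw [Set.uIcc_of_le hapi]
      rintro ⟨h1, -⟩; linarith
    have : (∫ u in a..Real.pi, Real.pi / u) = Real.pi * ∫ u in a..Real.pi, 1 / u := by
      rw [← intervalIntegral.integral_const_mul]
      congr 1; ext u; ring
    rw [this, integral_one_div h0]
    congr 1
    rw [ha]
    field_simp
  have hRint : IntervalIntegrable (fun u => Real.pi / u) volume a Real.pi := by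
    apply ContinuousOn.intervalIntegrable
    apply continuousOn_const.div continuousOn_id
    intro x hx
    rw [Set.uIcc_of_le hapi] at hx
    exact ne_of_gt (lt_of_lt_of_le ha0 hx.1)
  have hR : (∫ u in a..Real.pi, ‖dirich N u‖) ≤ Real.pi * Real.log (Real.pi * ((N : ℝ) + 1)) := by
    rw [← hval]
    apply intervalIntegral.integral_mono_on hapi (hii a Real.pi) hRint
    intro x hx
    have hx0 : 0 < x := lt_of_lt_of_le ha0 hx.1
    have := dirich_bound N x (ne_of_gt hx0) (by rw [abs_of_pos hx0]; exact hx.2)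
    rwa [abs_of_pos hx0] at this
  have hLint : IntervalIntegrable (fun u => Real.pi / (-u)) volume (-Real.pi) (-a) := by
    apply ContinuousOn.intervalIntegrable
    apply continuousOn_const.div (continuousOn_id.neg)
    intro x hx
    rw [Set.uIcc_of_le (by linarith : -Real.pi ≤ -a)] at hx
    have : x < 0 := lt_of_le_of_lt hx.2 (by linarith)
    simp only [Pi.neg_apply, id]
    intro hc
    rw [neg_eq_zero] at hc
    exact absurd hc (ne_of_lt this)
  have hLval : (∫ u in (-Real.pi)..(-a), Real.pi / (-u))
      = Real.pi * Real.log (Real.pi * ((N : ℝ) + 1)) := by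
    have := intervalIntegral.integral_comp_neg (a := -Real.pi) (b := -a)
      (fun u => Real.pi / u)
    simp only [neg_neg] at this
    rw [this, hval]
  have hL : (∫ u in (-Real.pi)..(-a), ‖dirich N u‖)
      ≤ Real.pi * Real.log (Real.pi * ((N : ℝ) + 1)) := by
    rw [← hLval]
    apply intervalIntegral.integral_mono_on (by linarith) (hii _ _) hLint
    intro x hx
    have hx0 : x < 0 := lt_of_le_of_lt hx.2 (by linarith)
    have := dirich_bound N x (ne_of_lt hx0) (by rw [abs_of_neg hx0]; linarith [hx.1])
    rwa [abs_of_neg hx0] at this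
  have hM : (∫ u in (-a)..a, ‖dirich N u‖) ≤ 4 := by
    have hmono : (∫ u in (-a)..a, ‖dirich N u‖) ≤ ∫ u in (-a)..a, (2 * (N : ℝ) + 1) := by
      apply intervalIntegral.integral_mono_on (by linarith) (hii _ _)
        intervalIntegrable_const
      intro x _
      exact norm_dirich_le N x
    have hconst : (∫ u in (-a)..a, (2 * (N : ℝ) + 1)) = 2 * a * (2 * (N : ℝ) + 1) := by
      rw [intervalIntegral.integral_const, smul_eq_mul]; ring
    have key : a * ((N : ℝ) + 1) = 1 := by rw [ha]; field_simp
    nlinarith [hmono, hconst, key, ha0]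
  have hsplit : (∫ u in (-Real.pi)..(-a), ‖dirich N u‖) + (∫ u in (-a)..a, ‖dirich N u‖)
      + (∫ u in a..Real.pi, ‖dirich N u‖) = ∫ u in (-Real.pi)..Real.pi, ‖dirich N u‖ := by
    rw [intervalIntegral.integral_add_adjacent_intervals (hii _ _) (hii _ _),
      intervalIntegral.integral_add_adjacent_intervals (hii _ _) (hii _ _)]
  linarith [hR, hL, hM, hsplit]

lemma fourier_sum_eq (g : ℝ → ℂ) (hg : Continuous g) (N : ℕ) (t : ℝ) :
    partialFourierSum g N t
      = (1 / (2 * Real.pi)) * ∫ s in (-Real.pi)..Real.pi, g s * dirich N (t - s) := by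
  unfold partialFourierSum fourierCoef
  calc (∑ k ∈ Finset.Icc (-(N : ℤ)) (N : ℤ),
          ((1 / (2 * Real.pi) : ℂ)
            * ∫ s in (-Real.pi)..Real.pi, g s * Complex.exp (-(k : ℂ) * Complex.I * s))
          * Complex.exp ((k : ℂ) * Complex.I * t))
      = (1 / (2 * Real.pi) : ℂ) * ∑ k ∈ Finset.Icc (-(N : ℤ)) (N : ℤ),
          ∫ s in (-Real.pi)..Real.pi,
            g s * Complex.exp (-(k : ℂ) * Complex.I * s) * Complex.exp ((k : ℂ) * Complex.I * t) := by
        rw [Finset.mul_sum]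
        refine Finset.sum_congr rfl fun k _ => ?_
        rw [mul_assoc, ← intervalIntegral.integral_mul_const]
    _ = (1 / (2 * Real.pi) : ℂ) * ∫ s in (-Real.pi)..Real.pi,
          ∑ k ∈ Finset.Icc (-(N : ℤ)) (N : ℤ),
            g s * Complex.exp (-(k : ℂ) * Complex.I * s) * Complex.exp ((k : ℂ) * Complex.I * t) := by
        rw [← intervalIntegral.integral_finset_sum]
        intro k _
        apply Continuous.intervalIntegrable
        exact ((hg.mul (Complex.continuous_exp.comp (by continuity))).mul continuous_const)
    _ = (1 / (2 * Real.pi) : ℂ) * ∫ s in (-Real.pi)..Real.pi, g s * dirich N (t - s) := by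
        congr 1
        apply intervalIntegral.integral_congr
        intro s _
        unfold dirich
        dsimp only
        rw [Finset.mul_sum]
        refine Finset.sum_congr rfl fun k _ => ?_
        rw [mul_assoc, ← Complex.exp_add]
        congr 2
        push_cast
        ring

theorem lebesgue_constant_bound :
    ∃ c : ℝ, 0 < c ∧ ∀ (N : ℕ) (g : ℝ → ℂ), Continuous g → Function.Periodic g (2 * Real.pi) →
      ∀ t : ℝ, ‖partialFourierSum g N t‖ ≤ c * (⨆ s : ℝ, ‖g s‖) * Real.log ((N : ℝ) + 2) := by
  refine ⟨6, by norm_num, fun N g hg hper t => ?_⟩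
  have hpi := Real.pi_pos
  have hpi3 := Real.pi_gt_three
  set M := ⨆ s : ℝ, ‖g s‖ with hMdef
  -- the sup is attained as a genuine bound
  have hbdd : BddAbove (Set.range fun s : ℝ => ‖g s‖) := by
    obtain ⟨C, hC⟩ := (isCompact_Icc (a := (0 : ℝ)) (b := 2 * Real.pi)).exists_bound_of_continuousOn
      hg.norm.continuousOn
    refine ⟨C, ?_⟩
    rintro x ⟨s, rfl⟩
    have hpn : Function.Periodic (fun s : ℝ => ‖g s‖) (2 * Real.pi) :=
      fun s => congrArg norm (hper s)
    obtain ⟨y, hy, hxy⟩ := hpn.exists_mem_Ico₀ (by linarith) s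
    dsimp only
    rw [hxy]
    simpa using hC y ⟨hy.1, hy.2.le⟩
  have hM : ∀ s, ‖g s‖ ≤ M := fun s => le_ciSup hbdd s
  have hM0 : 0 ≤ M := le_trans (norm_nonneg _) (hM 0)
  -- rewrite as convolution with the Dirichlet kernel
  rw [fourier_sum_eq g hg N t]
  have hDcont : Continuous fun s : ℝ => ‖dirich N (t - s)‖ :=
    ((dirich_continuous N).comp (by continuity)).norm
  have hnorm : ‖(1 / (2 * Real.pi) : ℂ)‖ = 1 / (2 * Real.pi) := by
    have h1 : (1 / (2 * Real.pi) : ℂ) = ((1 / (2 * Real.pi) : ℝ) : ℂ) := by push_cast; ring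
    rw [h1, Complex.norm_real, Real.norm_eq_abs, abs_of_pos (by positivity)]
  have step1 : ‖(1 / (2 * Real.pi) : ℂ) * ∫ s in (-Real.pi)..Real.pi, g s * dirich N (t - s)‖
      ≤ (1 / (2 * Real.pi)) * ∫ s in (-Real.pi)..Real.pi, ‖g s * dirich N (t - s)‖ := by
    rw [norm_mul, hnorm]
    exact mul_le_mul_of_nonneg_left
      (intervalIntegral.norm_integral_le_integral_norm (by linarith)) (by positivity)
  have hgDcont : Continuous fun s : ℝ => ‖g s * dirich N (t - s)‖ :=
    (hg.mul ((dirich_continuous N).comp (by continuity))).norm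
  have step2 : (∫ s in (-Real.pi)..Real.pi, ‖g s * dirich N (t - s)‖)
      ≤ M * ∫ s in (-Real.pi)..Real.pi, ‖dirich N (t - s)‖ := by
    rw [← intervalIntegral.integral_const_mul]
    apply intervalIntegral.integral_mono_on (by linarith)
      (hgDcont.intervalIntegrable _ _) ((continuous_const.mul hDcont).intervalIntegrable _ _)
    intro x _
    rw [norm_mul]
    exact mul_le_mul_of_nonneg_right (hM x) (norm_nonneg _)
  have step3 : (∫ s in (-Real.pi)..Real.pi, ‖dirich N (t - s)‖)
      = ∫ u in (-Real.pi)..Real.pi, ‖dirich N u‖ := by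
    rw [intervalIntegral.integral_comp_sub_left (fun u => ‖dirich N u‖) t]
    rw [show t - -Real.pi = t - Real.pi + 2 * Real.pi from by ring]
    rw [(dirich_periodic N).intervalIntegral_add_eq (t - Real.pi) (-Real.pi)]
    rw [show -Real.pi + 2 * Real.pi = Real.pi from by ring]
  set L := Real.log (Real.pi * ((N : ℝ) + 1)) with hL
  have hDib := dirich_integral_bound N
  have hN0 : (0 : ℝ) ≤ (N : ℝ) := Nat.cast_nonneg N
  have hlogpi : L ≤ Real.log 4 + Real.log ((N : ℝ) + 2) := by
    rw [hL, ← Real.log_mul (by norm_num) (by positivity)]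
    apply Real.log_le_log (by positivity)
    nlinarith [Real.pi_le_four]
  have hlog2lb : (0.6931471803 : ℝ) < Real.log 2 := Real.log_two_gt_d9
  have hlogN2 : Real.log 2 ≤ Real.log ((N : ℝ) + 2) :=
    Real.log_le_log (by norm_num) (by linarith)
  have hlog4 : Real.log 4 ≤ 1.3862944 := by
    rw [show (4 : ℝ) = 2 ^ 2 by norm_num, Real.log_pow]
    push_cast
    linarith [Real.log_two_lt_d9]
  have h2pi : 2 / Real.pi ≤ 1 := by
    rw [div_le_one hpi]; linarith
  have hInonneg : (0 : ℝ) ≤ ∫ u in (-Real.pi)..Real.pi, ‖dirich N u‖ :=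
    intervalIntegral.integral_nonneg (by linarith) fun u _ => norm_nonneg _
  have key : (1 / (2 * Real.pi)) * (4 + 2 * Real.pi * L) = 2 / Real.pi + L := by
    field_simp
    ring
  have hfinal : 2 / Real.pi + L ≤ 6 * Real.log ((N : ℝ) + 2) := by
    linarith
  calc ‖(1 / (2 * Real.pi) : ℂ) * ∫ s in (-Real.pi)..Real.pi, g s * dirich N (t - s)‖
      ≤ (1 / (2 * Real.pi)) * ∫ s in (-Real.pi)..Real.pi, ‖g s * dirich N (t - s)‖ := step1
    _ ≤ (1 / (2 * Real.pi)) * (M * ∫ u in (-Real.pi)..Real.pi, ‖dirich N u‖) := by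
        rw [← step3]
        exact mul_le_mul_of_nonneg_left step2 (by positivity)
    _ ≤ (1 / (2 * Real.pi)) * (M * (4 + 2 * Real.pi * L)) := by
        apply mul_le_mul_of_nonneg_left _ (by positivity)
        exact mul_le_mul_of_nonneg_left hDib hM0
    _ = M * (2 / Real.pi + L) := by rw [← key]; ring
    _ ≤ M * (6 * Real.log ((N : ℝ) + 2)) := mul_le_mul_of_nonneg_left hfinal hM0
    _ = 6 * M * Real.log ((N : ℝ) + 2) := by ring
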